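/- If λ = 1 is the only eigenvalue of B with |λ| = 1, then 1 is an eigenvalue of L and every eigenvalue λ of L with |λ| = 1 satisfies λ = 1. -/

import Mathlib

/-- In the setting of Theorem 4.1 (`L = qA + pB`, `0 < p < 1`, `q = 1 - p`,
`‖A‖, ‖B‖ ≤ 1`, `1` an eigenvalue of `A` and `B`, and a common nonzero fixed point `ρ₁` of the
adjoints), if `λ = 1` is the only eigenvalue of `B` with `|λ| = 1`, then `1` is an eigenvalue
of `L` and every eigenvalue `λ` of `L` with `|λ| = 1` satisfies `λ = 1`. -/
theorem stmt2 {H : Type*} [NormedAddCommGroup H] [InnerProductSpace ℂ H]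
    [FiniteDimensional ℂ H] [Nontrivial H]
    (A B : H →L[ℂ] H) (hA : ‖A‖ ≤ 1) (hB : ‖B‖ ≤ 1)
    (hAeig : ∃ v : H, v ≠ 0 ∧ A v = v) (hBeig : ∃ v : H, v ≠ 0 ∧ B v = v)
    (ρ₁ : H) (hρ₁ : ρ₁ ≠ 0)
    (hAadj : ContinuousLinearMap.adjoint A ρ₁ = ρ₁)
    (hBadj : ContinuousLinearMap.adjoint B ρ₁ = ρ₁)
    (p q : ℝ) (hp : 0 < p) (hp1 : p < 1) (hq : q = 1 - p)
    (L : H →L[ℂ] H) (hL : L = (q : ℂ) • A + (p : ℂ) • B)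
    (hBonly : ∀ (lam : ℂ) (v : H), v ≠ 0 → B v = lam • v → ‖lam‖ = 1 → lam = 1) :
    (∃ v : H, v ≠ 0 ∧ L v = v) ∧
      ∀ (lam : ℂ) (v : H), v ≠ 0 → L v = lam • v → ‖lam‖ = 1 → lam = 1 := by
  have hq0 : 0 < q := by rw [hq]; linarith
  have hqp : q + p = 1 := by rw [hq]; ring
  -- adjoint of L fixes ρ₁
  have hLadj : ContinuousLinearMap.adjoint L ρ₁ = ρ₁ := by
    rw [hL, map_add, map_smulₛₗ, map_smulₛₗ]
    simp only [ContinuousLinearMap.add_apply, ContinuousLinearMap.smul_apply, hAadj, hBadj]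
    rw [← add_smul]
    have h1 : starRingEnd ℂ (q : ℂ) + starRingEnd ℂ (p : ℂ) = 1 := by
      rw [Complex.conj_ofReal, Complex.conj_ofReal, ← Complex.ofReal_add, hqp,
        Complex.ofReal_one]
    rw [h1, one_smul]
  -- part 1 : 1 is an eigenvalue of L
  have part1 : ∃ v : H, v ≠ 0 ∧ L v = v := by
    set T : H →L[ℂ] H := L - 1 with hT
    by_contra hcon
    push_neg at hcon
    have hinj : Function.Injective T := by
      intro x y hxy
      by_contra hne
      apply hcon (x - y) (sub_ne_zero.mpr hne)
      have h0 : T (x - y) = 0 := by rw [map_sub, hxy, sub_self]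
      have h1 : L (x - y) - (x - y) = 0 := by
        simpa [hT, ContinuousLinearMap.sub_apply] using h0
      exact sub_eq_zero.mp h1
    have hsurj : Function.Surjective T := by
      have := (LinearMap.injective_iff_surjective (f := (T : H →ₗ[ℂ] H))).mp
        (by simpa using hinj)
      simpa using this
    -- T† ρ₁ = 0
    have hadj1 : ContinuousLinearMap.adjoint (1 : H →L[ℂ] H) = 1 :=
      ContinuousLinearMap.adjoint_id
    have hTadj : ContinuousLinearMap.adjoint T ρ₁ = 0 := by
      rw [hT, map_sub, ContinuousLinearMap.sub_apply, hLadj, hadj1,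
        ContinuousLinearMap.one_apply, sub_self]
    -- then ρ₁ ⊥ everything, contradiction
    apply hρ₁
    have key : ∀ z : H, (inner ℂ ρ₁ z : ℂ) = 0 := by
      intro z
      obtain ⟨y, hy⟩ := hsurj z
      have h2 : (inner ℂ ρ₁ (T y) : ℂ) = inner ℂ (ContinuousLinearMap.adjoint T ρ₁) y :=
        (ContinuousLinearMap.adjoint_inner_left T y ρ₁).symm
      rw [hTadj, inner_zero_left] at h2
      rw [← hy]; exact h2
    exact inner_self_eq_zero.mp (key ρ₁)
  refine ⟨part1, ?_⟩
  -- part 2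
  intro lam v hv hLv hlam
  have hAv : ‖A v‖ ≤ ‖v‖ := by
    calc ‖A v‖ ≤ ‖A‖ * ‖v‖ := A.le_opNorm v
    _ ≤ 1 * ‖v‖ := by gcongr
    _ = ‖v‖ := one_mul _
  have hBv : ‖B v‖ ≤ ‖v‖ := by
    calc ‖B v‖ ≤ ‖B‖ * ‖v‖ := B.le_opNorm v
    _ ≤ 1 * ‖v‖ := by gcongr
    _ = ‖v‖ := one_mul _
  have hLvnorm : ‖L v‖ = ‖v‖ := by
    rw [hLv, norm_smul]
    simp [hlam]
  have hLveq : L v = (q : ℂ) • A v + (p : ℂ) • B v := by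
    rw [hL]; simp
  have hle : ‖v‖ ≤ q * ‖A v‖ + p * ‖B v‖ := by
    calc ‖v‖ = ‖L v‖ := hLvnorm.symm
    _ = ‖(q : ℂ) • A v + (p : ℂ) • B v‖ := by rw [hLveq]
    _ ≤ ‖(q : ℂ) • A v‖ + ‖(p : ℂ) • B v‖ := norm_add_le _ _
    _ = q * ‖A v‖ + p * ‖B v‖ := by
        rw [norm_smul, norm_smul]
        simp [abs_of_pos hp, abs_of_pos hq0, Complex.norm_real]
  have hsum : q * ‖v‖ + p * ‖v‖ = ‖v‖ := by rw [← add_mul, hqp, one_mul]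
  have hAvn : ‖A v‖ = ‖v‖ := by
    by_contra h
    have h' : ‖A v‖ < ‖v‖ := lt_of_le_of_ne hAv h
    nlinarith [mul_lt_mul_of_pos_left h' hq0, mul_le_mul_of_nonneg_left hBv hp.le]
  have hBvn : ‖B v‖ = ‖v‖ := by
    by_contra h
    have h' : ‖B v‖ < ‖v‖ := lt_of_le_of_ne hBv h
    nlinarith [mul_lt_mul_of_pos_left h' hp, mul_le_mul_of_nonneg_left hAv hq0.le]
  have hv0 : (0:ℝ) < ‖v‖ := norm_pos_iff.mpr hv
  -- equality in triangle inequality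
  letI : InnerProductSpace ℝ H := InnerProductSpace.rclikeToReal ℂ H
  have heq : ‖(q : ℂ) • A v + (p : ℂ) • B v‖ = ‖(q : ℂ) • A v‖ + ‖(p : ℂ) • B v‖ := by
    have h1 : ‖(q : ℂ) • A v‖ = q * ‖v‖ := by
      rw [norm_smul]; simp [abs_of_pos hq0, hAvn, Complex.norm_real]
    have h2 : ‖(p : ℂ) • B v‖ = p * ‖v‖ := by
      rw [norm_smul]; simp [abs_of_pos hp, hBvn, Complex.norm_real]
    rw [h1, h2, ← hLveq, hLvnorm]
    rw [hq]; ring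
  have hray : SameRay ℝ ((q : ℂ) • A v) ((p : ℂ) • B v) := sameRay_iff_norm_add.mpr heq
  have hqA0 : (q : ℂ) • A v ≠ 0 := by
    rw [smul_ne_zero_iff]
    refine ⟨by exact_mod_cast hq0.ne', ?_⟩
    intro h; rw [h, norm_zero] at hAvn; exact hv0.ne hAvn
  have hpB0 : (p : ℂ) • B v ≠ 0 := by
    rw [smul_ne_zero_iff]
    refine ⟨by exact_mod_cast hp.ne', ?_⟩
    intro h; rw [h, norm_zero] at hBvn; exact hv0.ne hBvn
  obtain ⟨r₁, r₂, hr₁, hr₂, hre⟩ := hray.exists_pos hqA0 hpB0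
  have e1 : r₁ • ((q : ℂ) • A v) = (r₁ * q : ℝ) • A v := by
    rw [Complex.coe_smul, smul_smul]
  have e2 : r₂ • ((p : ℂ) • B v) = (r₂ * p : ℝ) • B v := by
    rw [Complex.coe_smul, smul_smul]
  have hre' : (r₁ * q : ℝ) • A v = (r₂ * p : ℝ) • B v := by
    rw [← e1, ← e2, hre]
  -- take norms : r₁ q ‖v‖ = r₂ p ‖v‖
  have hnorms : (r₁ * q) * ‖v‖ = (r₂ * p) * ‖v‖ := by
    have := congrArg norm hre'
    rwa [norm_smul, norm_smul, Real.norm_eq_abs, Real.norm_eq_abs,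
      abs_of_pos (by positivity), abs_of_pos (by positivity), hAvn, hBvn] at this
  have hscal : r₁ * q = r₂ * p := mul_right_cancel₀ hv0.ne' hnorms
  have hAB : A v = B v := by
    rw [hscal] at hre'
    exact smul_right_injective H (by positivity : (0:ℝ) < r₂ * p).ne' hre'
  -- then L v = B v, so B v = lam • v
  have hBlam : B v = lam • v := by
    have hLB : L v = B v := by
      rw [hLveq, hAB, ← add_smul, ← Complex.ofReal_add, hqp, Complex.ofReal_one, one_smul]
    rw [← hLB, hLv]
  exact hBonly lam v hv hBlam hlam
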